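/- arXiv:0902.1502 — 6 statements merged into one kernel-verified Lean document; each statement's English description precedes it below -/
import Mathlib

section
/- Let Ω be a 2n×2n real antisymmetric invertible matrix and V a 2n×2n real symmetric matrix. If the complex Hermitian matrix V + iΩ is positive semidefinite, then V is positive definite. -/
open Matrix
open scoped ComplexOrder

noncomputable def cplx {ι : Type*} (M : Matrix ι ι ℝ) : Matrix ι ι ℂ :=
  M.map Complex.ofReal

lemma dot_cast {m : ℕ} (M : Matrix (Fin m) (Fin m) ℝ) (x y : Fin m → ℝ) :
    (fun i => (x i : ℂ)) ⬝ᵥ (cplx M) *ᵥ (fun i => (y i : ℂ)) = ((x ⬝ᵥ M *ᵥ y : ℝ) : ℂ) := by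
  simp [dotProduct, mulVec, cplx, Matrix.map_apply, Finset.mul_sum]

lemma key_ineq (m : ℕ) (Ω V : Matrix (Fin m) (Fin m) ℝ)
    (hΩanti : Ωᵀ = -Ω) (hVsymm : Vᵀ = V)
    (h : (cplx V + Complex.I • cplx Ω).PosSemidef) (x y : Fin m → ℝ) :
    0 ≤ x ⬝ᵥ V *ᵥ x + y ⬝ᵥ V *ᵥ y - 2 * (x ⬝ᵥ Ω *ᵥ y) := by
  set z : Fin m → ℂ := fun i => (x i : ℂ) + Complex.I * (y i : ℂ) with hz
  have h0 := h.dotProduct_mulVec_nonneg z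
  have heq : star z ⬝ᵥ (cplx V + Complex.I • cplx Ω) *ᵥ z
      = ((x ⬝ᵥ V *ᵥ x + y ⬝ᵥ V *ᵥ y - 2 * (x ⬝ᵥ Ω *ᵥ y) : ℝ) : ℂ) := by
    have hzsum : z = (fun i => (x i : ℂ)) + Complex.I • (fun i => (y i : ℂ)) := by
      funext i; simp [hz]
    have hszsum : star z = (fun i => (x i : ℂ)) - Complex.I • (fun i => (y i : ℂ)) := by
      funext i
      simp [hz, sub_eq_add_neg]
    rw [hszsum, hzsum]
    have symV : y ⬝ᵥ V *ᵥ x = x ⬝ᵥ V *ᵥ y := by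
      rw [dotProduct_mulVec, ← mulVec_transpose, hVsymm, dotProduct_comm]
    have antiΩ : ∀ u v : Fin m → ℝ, v ⬝ᵥ Ω *ᵥ u = -(u ⬝ᵥ Ω *ᵥ v) := by
      intro u v
      rw [dotProduct_mulVec, ← mulVec_transpose, hΩanti, neg_mulVec, neg_dotProduct,
        dotProduct_comm]
    have hΩxx : x ⬝ᵥ Ω *ᵥ x = 0 := by linarith [antiΩ x x]
    have hΩyy : y ⬝ᵥ Ω *ᵥ y = 0 := by linarith [antiΩ y y]
    have hΩxy := antiΩ y x
    simp only [mulVec_add, mulVec_smul, add_mulVec, smul_mulVec,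
      dotProduct_add, dotProduct_smul, sub_dotProduct, smul_dotProduct, dot_cast,
      smul_eq_mul]
    rw [symV, hΩxy, hΩxx, hΩyy]
    push_cast
    ring_nf
    simp [Complex.I_sq]
  rw [heq] at h0
  exact_mod_cast h0

/-- If Ω is a real antisymmetric invertible matrix and V a real symmetric matrix such
that the Hermitian matrix V + iΩ is positive semidefinite, then V is positive definite. -/
theorem posdef_of_uncertainty (n : ℕ) (Ω V : Matrix (Fin (2 * n)) (Fin (2 * n)) ℝ)
    (hΩanti : Ωᵀ = -Ω) (hΩinv : IsUnit Ω.det) (hVsymm : Vᵀ = V)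
    (h : (cplx V + Complex.I • cplx Ω).PosSemidef) : V.PosDef := by
  have key := key_ineq (2 * n) Ω V hΩanti hVsymm h
  refine PosDef.of_dotProduct_mulVec_pos ?_ ?_
  · simpa [Matrix.IsHermitian, Matrix.conjTranspose_eq_transpose_of_trivial] using hVsymm
  intro u hu
  have hnonneg : 0 ≤ u ⬝ᵥ V *ᵥ u := by simpa using key u 0
  rw [star_trivial]
  rcases lt_or_eq_of_le hnonneg with hlt | hc
  · exact hlt
  exfalso
  -- c := u ⬝ᵥ V *ᵥ u = 0
  set w : Fin (2 * n) → ℝ := Ωᵀ *ᵥ u with hw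
  have hΩTunit : IsUnit Ωᵀ := (Matrix.isUnit_iff_isUnit_det _).mpr (by rwa [Matrix.det_transpose])
  have hwne : w ≠ 0 := by
    intro h0
    apply hu
    have hinj := Matrix.mulVec_injective_iff_isUnit.mpr hΩTunit
    have : Ωᵀ *ᵥ u = Ωᵀ *ᵥ 0 := by rw [Matrix.mulVec_zero]; exact h0
    simpa using hinj this
  have hk : u ⬝ᵥ Ω *ᵥ w = w ⬝ᵥ w := by
    rw [dotProduct_mulVec, ← mulVec_transpose, ← hw]
  have hkpos : 0 < w ⬝ᵥ w := by
    rcases (dotProduct_self_eq_zero (v := w)).not.mpr hwne with hne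
    have : 0 ≤ w ⬝ᵥ w := by
      simp only [dotProduct]
      exact Finset.sum_nonneg fun i _ => mul_self_nonneg _
    exact lt_of_le_of_ne this (Ne.symm hne)
  set t : ℝ := (w ⬝ᵥ V *ᵥ w + 1) / (2 * (w ⬝ᵥ w)) with ht
  have hkey := key (t • u) w
  have e1 : (t • u) ⬝ᵥ V *ᵥ (t • u) = t ^ 2 * (u ⬝ᵥ V *ᵥ u) := by
    rw [Matrix.mulVec_smul, smul_dotProduct, dotProduct_smul]
    simp [smul_eq_mul]; ring
  have e2 : (t • u) ⬝ᵥ Ω *ᵥ w = t * (u ⬝ᵥ Ω *ᵥ w) := by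
    rw [smul_dotProduct]; simp
  rw [e1, e2, ← hc, hk] at hkey
  have hmul : t * (2 * (w ⬝ᵥ w)) = w ⬝ᵥ V *ᵥ w + 1 := by
    rw [ht]; field_simp
  nlinarith [hkey, hmul]
end

section
/- Let u₀ ∈ ℝ^{2n} be nonzero and suppose u₀^T V u₀ = 0 for a real symmetric matrix V with V + iΩ ≥ 0 (Ω the standard symplectic form). Then for any u₁ ∈ ℝ^{2n}, evaluating z = u₀ + i a u₁ gives z*(V+iΩ)z = 2a u₁^T Ω u₀ + a² u₁^T V u₁ for all a ∈ ℝ; in particular if u₁^T Ω u₀ ≠ 0 one can choose a ∈ ℝ making this expression negative, a contradiction. -/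
open Matrix
open scoped ComplexOrder

def omega2 : Matrix (Fin 2) (Fin 2) ℝ := !![0, 1; -1, 0]

/-- The standard symplectic form Ω = ⊕ₖ ω on 2n dimensions, indexed by `Fin n × Fin 2`. -/
def OmegaStd (n : ℕ) : Matrix (Fin n × Fin 2) (Fin n × Fin 2) ℝ :=
  Matrix.of fun p q => if p.1 = q.1 then omega2 p.2 q.2 else 0

section helpers
variable {ι : Type*} [Fintype ι]

lemma cdot (A : Matrix ι ι ℝ) (x y : ι → ℝ) :
    (fun i => (x i : ℂ)) ⬝ᵥ ((A.map Complex.ofReal) *ᵥ fun i => (y i : ℂ))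
      = ((x ⬝ᵥ A *ᵥ y : ℝ) : ℂ) := by
  simp [dotProduct, mulVec, Finset.mul_sum]

lemma dot_swap (A : Matrix ι ι ℝ) (x y : ι → ℝ) : x ⬝ᵥ A *ᵥ y = y ⬝ᵥ Aᵀ *ᵥ x := by
  rw [dotProduct_mulVec, dotProduct_comm, mulVec_transpose]

lemma key_dot (A B : Matrix ι ι ℝ) (x y : ι → ℝ) :
    (fun i => (x i : ℂ)) ⬝ᵥ ((cplx A + Complex.I • cplx B) *ᵥ fun i => (y i : ℂ))
      = ((x ⬝ᵥ A *ᵥ y : ℝ) : ℂ) + Complex.I * ((x ⬝ᵥ B *ᵥ y : ℝ) : ℂ) := by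
  rw [add_mulVec, smul_mulVec, dotProduct_add, dotProduct_smul, cplx, cplx,
    cdot, cdot, smul_eq_mul]

end helpers

lemma omega_anti (n : ℕ) : (OmegaStd n)ᵀ = -(OmegaStd n) := by
  ext ⟨p1,p2⟩ ⟨q1,q2⟩
  simp only [OmegaStd, transpose_apply, of_apply, neg_apply]
  by_cases h : p1 = q1
  · subst h; simp; fin_cases p2 <;> fin_cases q2 <;> simp [omega2]
  · simp [h, Ne.symm h]

/-- Key computation in the proof that V + iΩ ≥ 0 implies V > 0: for z = u₀ + i a u₁ one has
z*(V+iΩ)z = 2a u₁ᵀΩu₀ + a² u₁ᵀVu₁; in particular if u₁ᵀΩu₀ ≠ 0 a contradiction arises. -/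
theorem key_computation (n : ℕ) (V : Matrix (Fin n × Fin 2) (Fin n × Fin 2) ℝ)
    (hVsymm : Vᵀ = V) (h : (cplx V + Complex.I • cplx (OmegaStd n)).PosSemidef)
    (u₀ : (Fin n × Fin 2) → ℝ) (hu₀ : u₀ ≠ 0) (hVu₀ : u₀ ⬝ᵥ (V *ᵥ u₀) = 0) :
    (∀ (u₁ : (Fin n × Fin 2) → ℝ) (a : ℝ),
      (star (fun i => (u₀ i : ℂ) + Complex.I * a * u₁ i)) ⬝ᵥ
        ((cplx V + Complex.I • cplx (OmegaStd n)) *ᵥ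
          (fun i => (u₀ i : ℂ) + Complex.I * a * u₁ i))
      = ((2 * a * (u₁ ⬝ᵥ (OmegaStd n *ᵥ u₀)) + a ^ 2 * (u₁ ⬝ᵥ (V *ᵥ u₁)) : ℝ) : ℂ)) ∧
    (∀ u₁ : (Fin n × Fin 2) → ℝ, u₁ ⬝ᵥ (OmegaStd n *ᵥ u₀) ≠ 0 → False) := by
  set M := cplx V + Complex.I • cplx (OmegaStd n) with hM
  have main : ∀ (u₁ : (Fin n × Fin 2) → ℝ) (a : ℝ),
      (star (fun i => (u₀ i : ℂ) + Complex.I * a * u₁ i)) ⬝ᵥ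
        (M *ᵥ (fun i => (u₀ i : ℂ) + Complex.I * a * u₁ i))
      = ((2 * a * (u₁ ⬝ᵥ (OmegaStd n *ᵥ u₀)) + a ^ 2 * (u₁ ⬝ᵥ (V *ᵥ u₁)) : ℝ) : ℂ) := by
    intro u₁ a
    set c₀ : (Fin n × Fin 2) → ℂ := fun i => (u₀ i : ℂ) with hc₀
    set c₁ : (Fin n × Fin 2) → ℂ := fun i => (u₁ i : ℂ) with hc₁
    have hz : (fun i => (u₀ i : ℂ) + Complex.I * a * u₁ i)
        = c₀ + (Complex.I * a) • c₁ := by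
      funext i; simp [hc₀, hc₁]
    have hzs : (star (fun i => (u₀ i : ℂ) + Complex.I * a * u₁ i))
        = c₀ - (Complex.I * a) • c₁ := by
      funext i
      simp [hc₀, hc₁, Pi.star_apply, sub_eq_add_neg]
    rw [hzs, hz]
    rw [mulVec_add, mulVec_smul, dotProduct_add, dotProduct_smul,
      sub_dotProduct, sub_dotProduct, smul_dotProduct, smul_dotProduct]
    have e00 := key_dot V (OmegaStd n) u₀ u₀
    have e01 := key_dot V (OmegaStd n) u₀ u₁
    have e10 := key_dot V (OmegaStd n) u₁ u₀
    have e11 := key_dot V (OmegaStd n) u₁ u₁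
    rw [hM] at *
    simp only [hc₀, hc₁, smul_eq_mul]
    rw [e00, e01, e10, e11]
    -- real relations
    have hO00 : u₀ ⬝ᵥ (OmegaStd n) *ᵥ u₀ = 0 := by
      have := dot_swap (OmegaStd n) u₀ u₀
      rw [omega_anti, neg_mulVec, dotProduct_neg] at this
      linarith
    have hO11 : u₁ ⬝ᵥ (OmegaStd n) *ᵥ u₁ = 0 := by
      have := dot_swap (OmegaStd n) u₁ u₁
      rw [omega_anti, neg_mulVec, dotProduct_neg] at this
      linarith
    have hO01 : u₀ ⬝ᵥ (OmegaStd n) *ᵥ u₁ = -(u₁ ⬝ᵥ (OmegaStd n) *ᵥ u₀) := by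
      have := dot_swap (OmegaStd n) u₀ u₁
      rw [omega_anti, neg_mulVec, dotProduct_neg] at this
      linarith
    have hV01 : u₀ ⬝ᵥ V *ᵥ u₁ = u₁ ⬝ᵥ V *ᵥ u₀ := by
      have := dot_swap V u₀ u₁
      rwa [hVsymm] at this
    rw [hVu₀, hO00, hO11, hO01, hV01]
    push_cast
    linear_combination (-((u₁ ⬝ᵥ (OmegaStd n) *ᵥ u₀ : ℝ) : ℂ) * (2*a)
        - ((u₁ ⬝ᵥ V *ᵥ u₁ : ℝ):ℂ) * (a^2)) * Complex.I_sq
  refine ⟨main, ?_⟩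
  intro u₁ hc
  set c := u₁ ⬝ᵥ (OmegaStd n) *ᵥ u₀ with hc'
  set d := u₁ ⬝ᵥ (V *ᵥ u₁) with hd'
  set a : ℝ := -c / (1 + |d|) with ha
  have habs : 0 < 1 + |d| := by positivity
  have hnn := h.dotProduct_mulVec_nonneg (fun i => (u₀ i : ℂ) + Complex.I * a * u₁ i)
  rw [main u₁ a] at hnn
  have hr : (0:ℝ) ≤ 2 * a * c + a ^ 2 * d := by
    have := (Complex.zero_le_real (x := 2 * a * c + a ^ 2 * d)).mp ?_
    · exact this
    · exact_mod_cast hnn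
  have hc2 : 0 < c^2 := by positivity
  have h1 : 2 * a * c + a ^ 2 * d
      = c^2 * (d - 2*(1+|d|)) / (1+|d|)^2 := by
    rw [ha]
    field_simp
    ring
  have h2 : d - 2*(1+|d|) < 0 := by
    cases abs_cases d with
    | inl h => linarith [h.1, h.2]
    | inr h => linarith [h.1, h.2]
  have : 2 * a * c + a ^ 2 * d < 0 := by
    rw [h1]
    apply div_neg_of_neg_of_pos
    · exact mul_neg_of_pos_of_neg hc2 h2
    · positivity
  linarith
end

section
/- Let V = [[A,C],[C^T,B]] be a 4×4 real symmetric matrix with A, B ∈ S(2,ℝ) positive definite and C ∈ M₂(ℝ). Then there exists a matrix S = S_A ⊕ S_B with S_A, S_B ∈ SL(2,ℝ) such that SVS^T = [[aI₂, C'],[C'^T, bI₂]] with C' = diag(c₊, c₋) diagonal, where a² = det A, b² = det B, and c₊c₋ = det C. -/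
open Matrix

/-- For any `x y`, there is an angle `θ` with `x cos θ + y sin θ = 0`. -/
lemma exists_angle_zero (x y : ℝ) : ∃ θ : ℝ, x * Real.cos θ + y * Real.sin θ = 0 := by
  by_cases hx : x = 0 ∧ y = 0
  · exact ⟨0, by simp [hx.1, hx.2]⟩
  · have hn : 0 < x ^ 2 + y ^ 2 := by
      rcases not_and_or.mp hx with h | h <;> positivity
    set n := Real.sqrt (x ^ 2 + y ^ 2) with hn_def
    have hnpos : 0 < n := Real.sqrt_pos.mpr hn
    have hn2 : n ^ 2 = x ^ 2 + y ^ 2 := Real.sq_sqrt hn.le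
    have ht1 : (y / n) ^ 2 ≤ 1 := by
      rw [div_pow]
      rw [div_le_one (by positivity)]
      nlinarith
    have htlb : -1 ≤ y / n := by nlinarith [sq_nonneg (y/n + 1), sq_nonneg (y/n)]
    have htub : y / n ≤ 1 := by nlinarith [sq_nonneg (y/n - 1)]
    have hsin : Real.sin (Real.arccos (y / n)) = |x| / n := by
      rw [Real.sin_arccos]
      have : 1 - (y / n) ^ 2 = (|x| / n) ^ 2 := by
        rw [div_pow, div_pow, sq_abs]
        field_simp
        nlinarith
      rw [this, Real.sqrt_sq (by positivity)]
    have hcos : Real.cos (Real.arccos (y / n)) = y / n := Real.cos_arccos htlb htub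
    rcases le_or_gt x 0 with hxle | hxgt
    · refine ⟨Real.arccos (y / n), ?_⟩
      rw [hcos, hsin, abs_of_nonpos hxle]
      field_simp
      ring
    · refine ⟨-Real.arccos (y / n), ?_⟩
      rw [Real.cos_neg, Real.sin_neg, hcos, hsin, abs_of_pos hxgt]
      field_simp
      ring


lemma transpose_fin_two' {α : Type*} (a b c d : α) : (!![a, b; c, d])ᵀ = !![a, c; b, d] := by
  ext i j
  fin_cases i <;> fin_cases j <;> rfl

lemma eq_fin_two {α : Type*} {a b c d e f g h : α}
    (h1 : a = e) (h2 : b = f) (h3 : c = g) (h4 : d = h) :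
    !![a, b; c, d] = !![e, f; g, h] := by rw [h1, h2, h3, h4]

/-- 2×2 real SVD by rotations. -/
lemma svd_two (M : Matrix (Fin 2) (Fin 2) ℝ) :
    ∃ (U V : Matrix (Fin 2) (Fin 2) ℝ) (cp cm : ℝ),
      U.det = 1 ∧ V.det = 1 ∧ U * Uᵀ = 1 ∧ V * Vᵀ = 1 ∧
      U * M * Vᵀ = !![cp, 0; 0, cm] := by
  obtain ⟨θ, hθ⟩ := exists_angle_zero (M 0 1 - M 1 0) (-(M 0 0 + M 1 1))
  obtain ⟨φ, hφ⟩ := exists_angle_zero (M 0 1 + M 1 0) (M 0 0 - M 1 1)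
  set u := (θ + φ) / 2 with hu
  set v := (φ - θ) / 2 with hv
  have huv1 : u - v = θ := by rw [hu, hv]; ring
  have huv2 : u + v = φ := by rw [hu, hv]; ring
  set cu := Real.cos u
  set su := Real.sin u
  set cv := Real.cos v
  set sv := Real.sin v
  have hθ' : (M 0 1 - M 1 0) * (cu * cv + su * sv)
      + (-(M 0 0 + M 1 1)) * (su * cv - cu * sv) = 0 := by
    have h1 : cu * cv + su * sv = Real.cos θ := by rw [← huv1, Real.cos_sub]
    have h2 : su * cv - cu * sv = Real.sin θ := by rw [← huv1, Real.sin_sub]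
    rw [h1, h2]; exact hθ
  have hφ' : (M 0 1 + M 1 0) * (cu * cv - su * sv)
      + (M 0 0 - M 1 1) * (su * cv + cu * sv) = 0 := by
    have h1 : cu * cv - su * sv = Real.cos φ := by rw [← huv2, Real.cos_add]
    have h2 : su * cv + cu * sv = Real.sin φ := by rw [← huv2, Real.sin_add]
    rw [h1, h2]; exact hφ
  have hpu : su ^ 2 + cu ^ 2 = 1 := Real.sin_sq_add_cos_sq u
  have hpv : sv ^ 2 + cv ^ 2 = 1 := Real.sin_sq_add_cos_sq v
  have hM : M = !![M 0 0, M 0 1; M 1 0, M 1 1] := by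
    ext i j; fin_cases i <;> fin_cases j <;> rfl
  refine ⟨!![cu, -su; su, cu], !![cv, -sv; sv, cv],
    (cu * M 0 0 - su * M 1 0) * cv - (cu * M 0 1 - su * M 1 1) * sv,
    (su * M 0 0 + cu * M 1 0) * sv + (su * M 0 1 + cu * M 1 1) * cv,
    ?_, ?_, ?_, ?_, ?_⟩
  · rw [Matrix.det_fin_two_of]; linarith
  · rw [Matrix.det_fin_two_of]; linarith
  · rw [transpose_fin_two', Matrix.mul_fin_two, Matrix.one_fin_two]
    exact eq_fin_two (by linear_combination hpu) (by ring) (by ring) (by linear_combination hpu)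
  · rw [transpose_fin_two', Matrix.mul_fin_two, Matrix.one_fin_two]
    exact eq_fin_two (by linear_combination hpv) (by ring) (by ring) (by linear_combination hpv)
  · have hlhs : !![cu, -su; su, cu] * M * !![cv, -sv; sv, cv]ᵀ =
        !![(cu * M 0 0 - su * M 1 0) * cv - (cu * M 0 1 - su * M 1 1) * sv,
           (cu * M 0 0 - su * M 1 0) * sv + (cu * M 0 1 - su * M 1 1) * cv;
           (su * M 0 0 + cu * M 1 0) * cv + (su * M 0 1 + cu * M 1 1) * (-sv),
           (su * M 0 0 + cu * M 1 0) * sv + (su * M 0 1 + cu * M 1 1) * cv] := by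
      rw [transpose_fin_two']
      conv_lhs => rw [hM]
      rw [Matrix.mul_fin_two, Matrix.mul_fin_two]
      exact eq_fin_two (by ring) (by ring) (by ring) (by ring)
    rw [hlhs]
    exact eq_fin_two rfl (by linear_combination (hθ' + hφ') / 2)
      (by linear_combination (hφ' - hθ') / 2) rfl

/-- A positive definite symmetric 2×2 real matrix can be reduced to √det • 1 by
a determinant-one matrix. -/
lemma reduce_posdef (A : Matrix (Fin 2) (Fin 2) ℝ) (hsym : Aᵀ = A) (hpos : A.PosDef) :
    ∃ S : Matrix (Fin 2) (Fin 2) ℝ, S.det = 1 ∧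
      S * A * Sᵀ = Real.sqrt A.det • (1 : Matrix (Fin 2) (Fin 2) ℝ) := by
  set p := A 0 0 with hp_def
  set q := A 0 1 with hq_def
  set r := A 1 1 with hr_def
  have hq' : A 1 0 = q := by rw [← hsym]; rfl
  have hdet : A.det = p * r - q * q := by
    rw [Matrix.det_fin_two, hq']
  have hppos : 0 < p := by
    exact hpos.diag_pos
  have hdpos : 0 < A.det := hpos.det_pos
  set a := Real.sqrt A.det with ha_def
  have hapos : 0 < a := Real.sqrt_pos.mpr hdpos
  have ha2 : a * a = p * r - q * q := by
    rw [← hdet]; exact Real.mul_self_sqrt hdpos.le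
  set α := Real.sqrt (a / p) with hα_def
  set β := Real.sqrt (p / a) with hβ_def
  have hα2 : α * α = a / p := Real.mul_self_sqrt (by positivity)
  have hβ2 : β * β = p / a := Real.mul_self_sqrt (by positivity)
  have hαβ : α * β = 1 := by
    rw [hα_def, hβ_def, ← Real.sqrt_mul (by positivity)]
    rw [show a / p * (p / a) = 1 by field_simp]
    exact Real.sqrt_one
  have hAeq : A = !![p, q; q, r] := by
    ext i j; fin_cases i <;> fin_cases j
    · rfl
    · rfl
    · exact hq'
    · rfl
  have hα2' : α * α * p = a := by
    rw [hα2]; field_simp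
  have hβ2' : β * β * a = p := by
    rw [hβ2]; field_simp
  refine ⟨!![α, 0; -q * β / p, β], ?_, ?_⟩
  · rw [Matrix.det_fin_two_of]; linarith
  · rw [hAeq, transpose_fin_two', Matrix.mul_fin_two, Matrix.mul_fin_two,
      show (a • (1 : Matrix (Fin 2) (Fin 2) ℝ)) = !![a, 0; 0, a] by
        ext i j; fin_cases i <;> fin_cases j <;> simp]
    have hp0 : p ≠ 0 := ne_of_gt hppos
    have ha0 : a ≠ 0 := ne_of_gt hapos
    refine eq_fin_two ?_ ?_ ?_ ?_
    · linear_combination hα2'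
    · field_simp
      ring
    · field_simp
      ring
    · field_simp
      linear_combination (-(β * β)) * ha2 + a * hβ2'

/-- Reduction of a two-mode correlation matrix to standard form by local symplectic
(SL(2,ℝ)) transformations. -/
theorem standard_form_reduction (A B C : Matrix (Fin 2) (Fin 2) ℝ)
    (hA : Aᵀ = A) (hB : Bᵀ = B) (hApos : A.PosDef) (hBpos : B.PosDef) :
    ∃ (SA SB : Matrix (Fin 2) (Fin 2) ℝ) (a b cp cm : ℝ),
      SA.det = 1 ∧ SB.det = 1 ∧
      (Matrix.fromBlocks SA 0 0 SB) * (Matrix.fromBlocks A C Cᵀ B) *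
          (Matrix.fromBlocks SA 0 0 SB)ᵀ
        = Matrix.fromBlocks (a • (1 : Matrix (Fin 2) (Fin 2) ℝ)) (!![cp, 0; 0, cm])
            (!![cp, 0; 0, cm])ᵀ (b • (1 : Matrix (Fin 2) (Fin 2) ℝ)) ∧
      a ^ 2 = A.det ∧ b ^ 2 = B.det ∧ cp * cm = C.det := by
  obtain ⟨S1, hS1det, hS1⟩ := reduce_posdef A hA hApos
  obtain ⟨S2, hS2det, hS2⟩ := reduce_posdef B hB hBpos
  obtain ⟨U, V, cp, cm, hUdet, hVdet, hUU, hVV, hUV⟩ := svd_two (S1 * C * S2ᵀ)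
  refine ⟨U * S1, V * S2, Real.sqrt A.det, Real.sqrt B.det, cp, cm, ?_, ?_, ?_, ?_, ?_, ?_⟩
  · rw [Matrix.det_mul, hUdet, hS1det]; ring
  · rw [Matrix.det_mul, hVdet, hS2det]; ring
  · have h1 : (U * S1) * A * (U * S1)ᵀ = Real.sqrt A.det • (1 : Matrix (Fin 2) (Fin 2) ℝ) := by
      rw [Matrix.transpose_mul]
      calc (U * S1) * A * (S1ᵀ * Uᵀ) = U * (S1 * A * S1ᵀ) * Uᵀ := by
            simp only [Matrix.mul_assoc]
        _ = U * (Real.sqrt A.det • 1) * Uᵀ := by rw [hS1]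
        _ = Real.sqrt A.det • (U * Uᵀ) := by
            simp [Matrix.mul_smul, Matrix.smul_mul]
        _ = _ := by rw [hUU]
    have h4 : (V * S2) * B * (V * S2)ᵀ = Real.sqrt B.det • (1 : Matrix (Fin 2) (Fin 2) ℝ) := by
      rw [Matrix.transpose_mul]
      calc (V * S2) * B * (S2ᵀ * Vᵀ) = V * (S2 * B * S2ᵀ) * Vᵀ := by
            simp only [Matrix.mul_assoc]
        _ = V * (Real.sqrt B.det • 1) * Vᵀ := by rw [hS2]
        _ = Real.sqrt B.det • (V * Vᵀ) := by
            simp [Matrix.mul_smul, Matrix.smul_mul]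
        _ = _ := by rw [hVV]
    have h2 : (U * S1) * C * (V * S2)ᵀ = !![cp, 0; 0, cm] := by
      rw [Matrix.transpose_mul]
      calc (U * S1) * C * (S2ᵀ * Vᵀ) = U * (S1 * C * S2ᵀ) * Vᵀ := by
            simp only [Matrix.mul_assoc]
        _ = _ := hUV
    have h3 : (V * S2) * Cᵀ * (U * S1)ᵀ = !![cp, 0; 0, cm]ᵀ := by
      rw [← h2]
      simp [Matrix.transpose_mul, Matrix.mul_assoc]
    rw [Matrix.fromBlocks_transpose, Matrix.fromBlocks_multiply, Matrix.fromBlocks_multiply]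
    simp only [Matrix.mul_zero, Matrix.zero_mul, add_zero, zero_add, Matrix.transpose_zero]
    rw [h1, h2, h3, h4]
  · exact Real.sq_sqrt hApos.det_pos.le
  · exact Real.sq_sqrt hBpos.det_pos.le
  · have := congrArg Matrix.det hUV
    rw [Matrix.det_mul, Matrix.det_mul, Matrix.det_mul, Matrix.det_mul, Matrix.det_transpose,
      Matrix.det_transpose, hUdet, hVdet, hS1det, hS2det, Matrix.det_fin_two_of] at this
    linarith [this]
end

section
/- Let V^I be the 4×4 standard-form matrix with parameters a,b,c₊,c₋ and Ω the two-mode symplectic form. The four eigenvalues of the Hermitian matrix V^I + iΩ are 2λ±^+ = a+b+√(μ ± 2√ν) and 2λ±^- = a+b−√(μ ± 2√ν), where μ = 4 + (a−b)² + 2(c₊² + c₋²) and ν = 4(a−b)² + (c₊+c₋)²[4 + (c₊−c₋)²]. -/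
open Matrix Polynomial

def Omega4 : Matrix (Fin 4) (Fin 4) ℝ :=
  !![0, 1, 0, 0; -1, 0, 0, 0; 0, 0, 0, 1; 0, 0, -1, 0]

/-- The four eigenvalues of V^I + iΩ are (a+b ± √(μ ± 2√ν))/2, expressed through the
characteristic polynomial. -/
theorem eigenvalues_standard_form (a b cp cm : ℝ) :
    let VI : Matrix (Fin 4) (Fin 4) ℝ :=
      !![a, 0, cp, 0; 0, a, 0, cm; cp, 0, b, 0; 0, cm, 0, b]
    let μ : ℝ := 4 + (a - b) ^ 2 + 2 * (cp ^ 2 + cm ^ 2)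
    let ν : ℝ := 4 * (a - b) ^ 2 + (cp + cm) ^ 2 * (4 + (cp - cm) ^ 2)
    let lpp : ℝ := (a + b + Real.sqrt (μ + 2 * Real.sqrt ν)) / 2
    let lmp : ℝ := (a + b + Real.sqrt (μ - 2 * Real.sqrt ν)) / 2
    let lpm : ℝ := (a + b - Real.sqrt (μ + 2 * Real.sqrt ν)) / 2
    let lmm : ℝ := (a + b - Real.sqrt (μ - 2 * Real.sqrt ν)) / 2
    (cplx VI + Complex.I • cplx Omega4).charpoly
      = (X - C (lpp : ℂ)) * (X - C (lmp : ℂ)) * (X - C (lpm : ℂ)) * (X - C (lmm : ℂ)) := by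

  intro VI μ ν lpp lmp lpm lmm
  have hν : (0:ℝ) ≤ (4 * (a - b) ^ 2 + (cp + cm) ^ 2 * (4 + (cp - cm) ^ 2)) := by positivity
  have hμ : (0:ℝ) ≤ (4 + (a - b) ^ 2 + 2 * (cp ^ 2 + cm ^ 2)) := by positivity
  have hDnn : (0:ℝ) ≤ Real.sqrt (4 * (a - b) ^ 2 + (cp + cm) ^ 2 * (4 + (cp - cm) ^ 2)) := Real.sqrt_nonneg _
  have hA0 : (0:ℝ) ≤ (4 + (a - b) ^ 2 + 2 * (cp ^ 2 + cm ^ 2)) + 2 * Real.sqrt (4 * (a - b) ^ 2 + (cp + cm) ^ 2 * (4 + (cp - cm) ^ 2)) := by positivity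
  have hB0 : (0:ℝ) ≤ (4 + (a - b) ^ 2 + 2 * (cp ^ 2 + cm ^ 2)) - 2 * Real.sqrt (4 * (a - b) ^ 2 + (cp + cm) ^ 2 * (4 + (cp - cm) ^ 2)) := by
    have h1 : Real.sqrt (4 * (a - b) ^ 2 + (cp + cm) ^ 2 * (4 + (cp - cm) ^ 2)) ≤ (4 + (a - b) ^ 2 + 2 * (cp ^ 2 + cm ^ 2)) / 2 := by
      rw [show (4 + (a - b) ^ 2 + 2 * (cp ^ 2 + cm ^ 2)) / 2 = Real.sqrt (((4 + (a - b) ^ 2 + 2 * (cp ^ 2 + cm ^ 2)) / 2) ^ 2) from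
        (Real.sqrt_sq (by positivity)).symm]
      apply Real.sqrt_le_sqrt
      nlinarith [sq_nonneg ((a - b) ^ 2 + (cp + cm) ^ 2 - (cp - cm) ^ 2 - 4),
        sq_nonneg ((a - b) * (cp - cm))]
    linarith
  have hD : Real.sqrt (4 * (a - b) ^ 2 + (cp + cm) ^ 2 * (4 + (cp - cm) ^ 2)) ^ 2 = (4 * (a - b) ^ 2 + (cp + cm) ^ 2 * (4 + (cp - cm) ^ 2)) := Real.sq_sqrt hν
  have hA : Real.sqrt ((4 + (a - b) ^ 2 + 2 * (cp ^ 2 + cm ^ 2)) + 2 * Real.sqrt (4 * (a - b) ^ 2 + (cp + cm) ^ 2 * (4 + (cp - cm) ^ 2))) ^ 2 = (4 + (a - b) ^ 2 + 2 * (cp ^ 2 + cm ^ 2)) + 2 * Real.sqrt (4 * (a - b) ^ 2 + (cp + cm) ^ 2 * (4 + (cp - cm) ^ 2)) := Real.sq_sqrt hA0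
  have hB : Real.sqrt ((4 + (a - b) ^ 2 + 2 * (cp ^ 2 + cm ^ 2)) - 2 * Real.sqrt (4 * (a - b) ^ 2 + (cp + cm) ^ 2 * (4 + (cp - cm) ^ 2))) ^ 2 = (4 + (a - b) ^ 2 + 2 * (cp ^ 2 + cm ^ 2)) - 2 * Real.sqrt (4 * (a - b) ^ 2 + (cp + cm) ^ 2 * (4 + (cp - cm) ^ 2)) := Real.sq_sqrt hB0
  have hDc : ((Real.sqrt (4 * (a - b) ^ 2 + (cp + cm) ^ 2 * (4 + (cp - cm) ^ 2)) : ℂ)) ^ 2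
      = 4 * ((a:ℂ) - b) ^ 2 + ((cp:ℂ) + cm) ^ 2 * (4 + ((cp:ℂ) - cm) ^ 2) := by
    have h := congrArg (Complex.ofReal) hD
    push_cast at h ⊢
    rw [h]
  have hAc : ((Real.sqrt ((4 + (a - b) ^ 2 + 2 * (cp ^ 2 + cm ^ 2)) + 2 * Real.sqrt (4 * (a - b) ^ 2 + (cp + cm) ^ 2 * (4 + (cp - cm) ^ 2))) : ℂ)) ^ 2
      = (4 + ((a:ℂ) - b) ^ 2 + 2 * ((cp:ℂ) ^ 2 + (cm:ℂ) ^ 2)) + 2 * (Real.sqrt (4 * (a - b) ^ 2 + (cp + cm) ^ 2 * (4 + (cp - cm) ^ 2)) : ℂ) := by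
    have h := congrArg (Complex.ofReal) hA
    push_cast at h ⊢
    rw [h]
  have hBc : ((Real.sqrt ((4 + (a - b) ^ 2 + 2 * (cp ^ 2 + cm ^ 2)) - 2 * Real.sqrt (4 * (a - b) ^ 2 + (cp + cm) ^ 2 * (4 + (cp - cm) ^ 2))) : ℂ)) ^ 2
      = (4 + ((a:ℂ) - b) ^ 2 + 2 * ((cp:ℂ) ^ 2 + (cm:ℂ) ^ 2)) - 2 * (Real.sqrt (4 * (a - b) ^ 2 + (cp + cm) ^ 2 * (4 + (cp - cm) ^ 2)) : ℂ) := by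
    have h := congrArg (Complex.ofReal) hB
    push_cast at h ⊢
    rw [h]
  have hlpp : ((lpp : ℝ) : ℂ) = ((a:ℂ) + b + (Real.sqrt ((4 + (a - b) ^ 2 + 2 * (cp ^ 2 + cm ^ 2)) + 2 * Real.sqrt (4 * (a - b) ^ 2 + (cp + cm) ^ 2 * (4 + (cp - cm) ^ 2))) : ℂ)) / 2 := by
    show ((((a + b + Real.sqrt ((4 + (a - b) ^ 2 + 2 * (cp ^ 2 + cm ^ 2)) + 2 * Real.sqrt (4 * (a - b) ^ 2 + (cp + cm) ^ 2 * (4 + (cp - cm) ^ 2)))) / 2 : ℝ)) : ℂ) = _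
    push_cast; ring
  have hlmp : ((lmp : ℝ) : ℂ) = ((a:ℂ) + b + (Real.sqrt ((4 + (a - b) ^ 2 + 2 * (cp ^ 2 + cm ^ 2)) - 2 * Real.sqrt (4 * (a - b) ^ 2 + (cp + cm) ^ 2 * (4 + (cp - cm) ^ 2))) : ℂ)) / 2 := by
    show ((((a + b + Real.sqrt ((4 + (a - b) ^ 2 + 2 * (cp ^ 2 + cm ^ 2)) - 2 * Real.sqrt (4 * (a - b) ^ 2 + (cp + cm) ^ 2 * (4 + (cp - cm) ^ 2)))) / 2 : ℝ)) : ℂ) = _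
    push_cast; ring
  have hlpm : ((lpm : ℝ) : ℂ) = ((a:ℂ) + b - (Real.sqrt ((4 + (a - b) ^ 2 + 2 * (cp ^ 2 + cm ^ 2)) + 2 * Real.sqrt (4 * (a - b) ^ 2 + (cp + cm) ^ 2 * (4 + (cp - cm) ^ 2))) : ℂ)) / 2 := by
    show ((((a + b - Real.sqrt ((4 + (a - b) ^ 2 + 2 * (cp ^ 2 + cm ^ 2)) + 2 * Real.sqrt (4 * (a - b) ^ 2 + (cp + cm) ^ 2 * (4 + (cp - cm) ^ 2)))) / 2 : ℝ)) : ℂ) = _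
    push_cast; ring
  have hlmm : ((lmm : ℝ) : ℂ) = ((a:ℂ) + b - (Real.sqrt ((4 + (a - b) ^ 2 + 2 * (cp ^ 2 + cm ^ 2)) - 2 * Real.sqrt (4 * (a - b) ^ 2 + (cp + cm) ^ 2 * (4 + (cp - cm) ^ 2))) : ℂ)) / 2 := by
    show ((((a + b - Real.sqrt ((4 + (a - b) ^ 2 + 2 * (cp ^ 2 + cm ^ 2)) - 2 * Real.sqrt (4 * (a - b) ^ 2 + (cp + cm) ^ 2 * (4 + (cp - cm) ^ 2)))) / 2 : ℝ)) : ℂ) = _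
    push_cast; ring
  rw [Matrix.charpoly]
  simp (config := { decide := true }) [Matrix.det_succ_row_zero, Fin.sum_univ_succ,
    charmatrix_apply, VI, cplx, Omega4, Matrix.map_apply, Fin.succAbove,
    Matrix.diagonal_apply]
  apply Polynomial.funext
  intro x
  simp only [eval_mul, eval_add, eval_sub, eval_neg, eval_X, eval_C, eval_pow, eval_one,
    eval_zero]
  rw [hlpp, hlmp, hlpm, hlmm]
  linear_combination
    (2 * x ^ 2 + 2 * (cp:ℂ) * cm - 2 * (b:ℂ) * x + (b:ℂ) ^ 2 - 2 * (a:ℂ) * x + (a:ℂ) ^ 2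
      + Complex.I ^ 2 - 1) * Complex.I_sq
    + (1 / 4 : ℂ) * hDc
    + ((x ^ 2 - ((a:ℂ) + b) * x
        + (((a:ℂ) + b) ^ 2 - (4 + ((a:ℂ) - b) ^ 2 + 2 * ((cp:ℂ) ^ 2 + (cm:ℂ) ^ 2))
          + 2 * (Real.sqrt (4 * (a - b) ^ 2 + (cp + cm) ^ 2 * (4 + (cp - cm) ^ 2)) : ℂ)) / 4) / 4) * hAc
    + ((x ^ 2 - ((a:ℂ) + b) * x
        + (((a:ℂ) + b) ^ 2 - ((Real.sqrt ((4 + (a - b) ^ 2 + 2 * (cp ^ 2 + cm ^ 2)) + 2 * Real.sqrt (4 * (a - b) ^ 2 + (cp + cm) ^ 2 * (4 + (cp - cm) ^ 2))) : ℂ)) ^ 2) / 4) / 4) * hBc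
end

section
/- Let V^I be the 4×4 standard-form matrix with a > 0, b > 0 and off-diagonal entries c₊, c₋. Then V^I + iΩ ≥ 0 if and only if both (i) a² + b² + 2c₊c₋ ≤ (ab − c₊²)(ab − c₋²) + 1 and (ii) 2ab − c₊² − c₋² ≥ 2 hold. -/
open Matrix
open scoped ComplexOrder

namespace StdFormAux

open Complex

/-- 2×2 Hermitian PSD criterion for matrices of the shape `!![x, I w; -I w, y]`. -/
lemma psd2 (x y w : ℝ) :
    (!![(x:ℂ), I*w; -(I*w), (y:ℂ)]).PosSemidef ↔ 0 ≤ x ∧ 0 ≤ y ∧ w^2 ≤ x*y := by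
  constructor
  · intro h
    have hq := (posSemidef_iff_dotProduct_mulVec.1 h).2
    have h0 := hq ![1, 0]
    have h1 := hq ![0, 1]
    have h2 := hq ![(w:ℂ), I*x]
    have h3 := hq ![((y:ℝ)+1 : ℝ), I*w]
    simp [dotProduct, Matrix.mulVec, Fin.sum_univ_two, Complex.le_def] at h0 h1 h2 h3
    refine ⟨h0, h1, ?_⟩
    rcases eq_or_lt_of_le h0 with hx | hx
    · nlinarith [sq_nonneg w]
    · nlinarith [sq_nonneg w]
  · rintro ⟨hx, hy, hw⟩
    rw [posSemidef_iff_dotProduct_mulVec]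
    constructor
    · show _ᴴ = _
      ext i j
      fin_cases i <;> fin_cases j <;>
        simp [Matrix.conjTranspose_apply, Complex.ext_iff]
    · intro v
      have e : star v ⬝ᵥ !![(x:ℂ), I*w; -(I*w), (y:ℂ)] *ᵥ v =
          ((x * Complex.normSq (v 0) + y * Complex.normSq (v 1)
            - 2*w*((v 0).re * (v 1).im - (v 0).im * (v 1).re) : ℝ) : ℂ) := by
        simp [dotProduct, Matrix.mulVec, Fin.sum_univ_two, Complex.ext_iff,
          Complex.normSq_apply]
        constructor <;> ring
      rw [e]
      rw [Complex.zero_le_real]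
      rcases eq_or_lt_of_le hx with hx' | hx'
      · have hw0 : w = 0 := by nlinarith [sq_nonneg w]
        rw [hw0, ← hx']
        simp [Complex.normSq_apply]
        nlinarith [sq_nonneg ((v 1).re), sq_nonneg ((v 1).im)]
      · rw [Complex.normSq_apply, Complex.normSq_apply]
        nlinarith [sq_nonneg (x*(v 0).re - w*(v 1).im), sq_nonneg (x*(v 0).im + w*(v 1).re),
          mul_nonneg (sub_nonneg.2 hw)
            (add_nonneg (sq_nonneg ((v 1).re)) (sq_nonneg ((v 1).im)))]

/-- The 2×2 block `!![a, I; -I, a]` is positive definite when `1 < a`. -/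
lemma posdefA (a : ℝ) (ha : 1 < a) : (!![(a:ℂ), I; -I, a]).PosDef := by
  rw [posDef_iff_dotProduct_mulVec]
  constructor
  · show _ᴴ = _
    ext i j
    fin_cases i <;> fin_cases j <;> simp [Matrix.conjTranspose_apply, Complex.ext_iff]
  · intro v hv
    have e : star v ⬝ᵥ !![(a:ℂ), I; -I, a] *ᵥ v =
        ((a * Complex.normSq (v 0) + a * Complex.normSq (v 1)
          - 2*((v 0).re * (v 1).im - (v 0).im * (v 1).re) : ℝ) : ℂ) := by
      simp [dotProduct, Matrix.mulVec, Fin.sum_univ_two, Complex.ext_iff, Complex.normSq_apply]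
      constructor <;> ring
    rw [e, Complex.zero_lt_real]
    have hvn : 0 < Complex.normSq (v 0) + Complex.normSq (v 1) := by
      rcases Function.ne_iff.1 hv with ⟨i, hi⟩
      have h2 := Complex.normSq_nonneg (v 0)
      have h3 := Complex.normSq_nonneg (v 1)
      fin_cases i <;> simp only [] at hi <;>
        [have h1 := Complex.normSq_pos.2 hi; have h1 := Complex.normSq_pos.2 hi] <;>
        simp only [Fin.zero_eta, Fin.mk_one, Fin.isValue] at h1 <;> linarith
    rw [Complex.normSq_apply, Complex.normSq_apply] at *
    nlinarith [sq_nonneg ((v 0).re - (v 1).im), sq_nonneg ((v 0).im + (v 1).re)]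

/-- Reindexing of the 4×4 standard-form matrix into 2×2 blocks. -/
lemma reindex (a b cp cm : ℝ) :
    (cplx (!![a, 0, cp, 0; 0, a, 0, cm; cp, 0, b, 0; 0, cm, 0, b])
        + Complex.I • cplx Omega4).PosSemidef ↔
    (fromBlocks !![(a:ℂ), I; -I, a] !![(cp:ℂ), 0; 0, cm]
        (!![(cp:ℂ), 0; 0, cm])ᴴ !![(b:ℂ), I; -I, b]).PosSemidef := by
  have key : (fromBlocks !![(a:ℂ), I; -I, a] !![(cp:ℂ), 0; 0, cm]
      (!![(cp:ℂ), 0; 0, cm])ᴴ !![(b:ℂ), I; -I, b]) =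
      (cplx (!![a, 0, cp, 0; 0, a, 0, cm; cp, 0, b, 0; 0, cm, 0, b])
        + Complex.I • cplx Omega4).submatrix finSumFinEquiv finSumFinEquiv := by
    ext i j
    rcases i with i | i <;> rcases j with j | j <;> fin_cases i <;> fin_cases j <;>
      simp [cplx, Omega4, Matrix.fromBlocks, finSumFinEquiv, Matrix.conjTranspose_apply,
        show (Fin.castAdd 2 (0:Fin 2) : Fin 4) = 0 from rfl,
        show (Fin.castAdd 2 (1:Fin 2) : Fin 4) = 1 from rfl,
        show (Fin.addNat (0:Fin 2) 2 : Fin 4) = 2 from rfl,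
        show (Fin.addNat (1:Fin 2) 2 : Fin 4) = 3 from rfl, Matrix.vecHead, Matrix.vecTail]
  rw [key, Matrix.posSemidef_submatrix_equiv]

/-- The Schur complement of the `a`-block. -/
lemma schurS (a b cp cm : ℝ) (ha : 1 < a) :
    (!![(b:ℂ), I; -I, b]) - (!![(cp:ℂ), 0; 0, cm])ᴴ * (!![(a:ℂ), I; -I, a])⁻¹
        * !![(cp:ℂ), 0; 0, cm]
      = !![((b - a*cp^2/(a^2-1) : ℝ) : ℂ), I * ((1 + cp*cm/(a^2-1) : ℝ) : ℂ);
           -(I * ((1 + cp*cm/(a^2-1) : ℝ) : ℂ)), ((b - a*cm^2/(a^2-1) : ℝ) : ℂ)] := by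
  have hd : ((a:ℂ)^2 - 1) ≠ 0 := by
    intro h
    have : (a:ℝ)^2 - 1 = 0 := by exact_mod_cast h
    nlinarith
  have hinv : (!![(a:ℂ), I; -I, a])⁻¹ = ((a:ℂ)^2 - 1)⁻¹ • !![(a:ℂ), -I; I, a] := by
    apply Matrix.inv_eq_right_inv
    ext i j
    fin_cases i <;> fin_cases j <;>
      simp [Matrix.mul_apply, Fin.sum_univ_two] <;> field_simp <;> ring_nf <;> simp <;> ring
  rw [hinv]
  ext i j
  fin_cases i <;> fin_cases j <;>
    simp [Matrix.mul_apply, Fin.sum_univ_two, Matrix.conjTranspose_apply] <;>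
    push_cast <;> field_simp <;> ring_nf <;> simp <;> ring

/-- Key equivalence for `1 < a` via the Schur complement. -/
lemma schur_iff (a b cp cm : ℝ) (ha : 1 < a) :
    (cplx (!![a, 0, cp, 0; 0, a, 0, cm; cp, 0, b, 0; 0, cm, 0, b])
        + Complex.I • cplx Omega4).PosSemidef ↔
      (0 ≤ b - a*cp^2/(a^2-1) ∧ 0 ≤ b - a*cm^2/(a^2-1) ∧
        (1 + cp*cm/(a^2-1))^2 ≤ (b - a*cp^2/(a^2-1)) * (b - a*cm^2/(a^2-1))) := by
  have hA := posdefA a ha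
  have hdv : (!![(a:ℂ), I; -I, a]).det = ((a*a-1 : ℝ):ℂ) := by
    rw [Matrix.det_fin_two]; simp
  have hdet : IsUnit (!![(a:ℂ), I; -I, a]).det := by
    rw [hdv, isUnit_iff_ne_zero]
    intro h
    have h3 : (a*a - 1 : ℝ) = 0 := by exact_mod_cast h
    nlinarith
  haveI := Matrix.invertibleOfIsUnitDet _ hdet
  rw [reindex, Matrix.PosDef.fromBlocks₁₁ _ _ hA, schurS a b cp cm ha, psd2]

/-- Mode-swap symmetry. -/
lemma swap (a b cp cm : ℝ) :
    (cplx (!![a, 0, cp, 0; 0, a, 0, cm; cp, 0, b, 0; 0, cm, 0, b])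
        + Complex.I • cplx Omega4).PosSemidef ↔
    (cplx (!![b, 0, cp, 0; 0, b, 0, cm; cp, 0, a, 0; 0, cm, 0, a])
        + Complex.I • cplx Omega4).PosSemidef := by
  let e : Fin 4 ≃ Fin 4 :=
    ⟨![2, 3, 0, 1], ![2, 3, 0, 1], by decide, by decide⟩
  have key : (cplx (!![b, 0, cp, 0; 0, b, 0, cm; cp, 0, a, 0; 0, cm, 0, a])
        + Complex.I • cplx Omega4)
      = (cplx (!![a, 0, cp, 0; 0, a, 0, cm; cp, 0, b, 0; 0, cm, 0, b])
        + Complex.I • cplx Omega4).submatrix e e := by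
    ext i j
    fin_cases i <;> fin_cases j <;>
      simp [cplx, Omega4, e, Equiv.coe_fn_mk, Matrix.vecHead, Matrix.vecTail]
  constructor
  · intro h
    rw [key]
    exact h.submatrix e
  · intro h
    rw [key] at h
    exact (Matrix.posSemidef_submatrix_equiv e).1 h

end StdFormAux
namespace StdFormAux

/-- Forward algebra: Schur conditions imply the two standard-form conditions. -/
lemma fwdAlg (a b cp cm : ℝ) (ha : 1 < a) (hb : 0 < b)
    (hT1 : a*cp^2 ≤ b*(a^2-1)) (hT2 : a*cm^2 ≤ b*(a^2-1))
    (hW : (a^2-1+cp*cm)^2 ≤ (b*(a^2-1)-a*cp^2)*(b*(a^2-1)-a*cm^2)) :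
    a^2+b^2+2*cp*cm ≤ (a*b-cp^2)*(a*b-cm^2)+1 ∧ 2 ≤ 2*a*b-cp^2-cm^2 := by
  have hd : 0 < a^2 - 1 := by nlinarith
  have hE1 : a^2+b^2+2*cp*cm ≤ (a*b-cp^2)*(a*b-cm^2)+1 := by
    have key : (b*(a^2-1)-a*cp^2)*(b*(a^2-1)-a*cm^2) - (a^2-1+cp*cm)^2
        = (a^2-1) * ((a*b-cp^2)*(a*b-cm^2)+1 - (a^2+b^2+2*cp*cm)) := by ring
    nlinarith [mul_pos hd hd]
  refine ⟨hE1, ?_⟩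
  by_contra h
  push_neg at h
  have hPQ : (a*b-cp^2)*(a*b-cm^2) ≤ (2*a*b-cp^2-cm^2)^2/4 := by
    nlinarith [sq_nonneg (cp^2 - cm^2)]
  have h2 : (a-b)^2 + (2*a*b-cp^2-cm^2) - 1 ≤ (2*a*b-cp^2-cm^2)^2/4 := by
    nlinarith [sq_nonneg (cp+cm)]
  have h3 : 2*b ≤ a*(2*a*b-cp^2-cm^2) := by nlinarith
  have h4 : a*(2-(2*a*b-cp^2-cm^2))/2 ≤ a - b := by nlinarith
  have hY : 0 < 2 - (2*a*b-cp^2-cm^2) := by linarith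
  have h5 := mul_self_le_mul_self (by nlinarith : (0:ℝ) ≤ a*(2-(2*a*b-cp^2-cm^2))/2) h4
  nlinarith [h5, mul_pos hd (mul_pos hY hY)]

/-- Backward algebra: the conditions with `b ≤ a` give the first Schur inequality. -/
lemma bwd1 (a b cp cm : ℝ) (ha : 1 < a) (hb : 0 < b) (hba : b ≤ a)
    (h1 : a^2+b^2+2*cp*cm ≤ (a*b-cp^2)*(a*b-cm^2)+1) (h2 : 2 ≤ 2*a*b-cp^2-cm^2) :
    a*cp^2 ≤ b*(a^2-1) := by
  by_contra hc
  push_neg at hc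
  have h5 : (a^2-1+cp*cm)^2 ≤ (b*(a^2-1)-a*cp^2)*(b*(a^2-1)-a*cm^2) := by
    have key : (b*(a^2-1)-a*cp^2)*(b*(a^2-1)-a*cm^2) - (a^2-1+cp*cm)^2
        = (a^2-1)*((a*b-cp^2)*(a*b-cm^2)+1 - (a^2+b^2+2*cp*cm)) := by ring
    nlinarith [key, mul_nonneg (by nlinarith : (0:ℝ) ≤ a^2-1)
      (by linarith : (0:ℝ) ≤ (a*b-cp^2)*(a*b-cm^2)+1 - (a^2+b^2+2*cp*cm))]
  have h6 : b*(a^2-1)-a*cm^2 ≤ 0 := by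
    by_contra h6c
    push_neg at h6c
    nlinarith [mul_pos (show 0 < a*cp^2 - b*(a^2-1) by linarith) h6c,
      sq_nonneg (a^2-1+cp*cm)]
  nlinarith

/-- The conditions force `a, b ≥ 1`. -/
lemma geone (a b cp cm : ℝ) (ha : 0 < a) (hb : 0 < b)
    (h1 : a^2+b^2+2*cp*cm ≤ (a*b-cp^2)*(a*b-cm^2)+1) (h2 : 2 ≤ 2*a*b-cp^2-cm^2) :
    1 ≤ a ∧ 1 ≤ b := by
  have k1 : (cp^2+cm^2)^2/4 ≤ (a^2-1)*(b^2-1) := by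
    nlinarith [sq_nonneg (cp+cm), sq_nonneg (cp^2-cm^2),
      mul_nonneg (by positivity : (0:ℝ) ≤ cp^2+cm^2)
        (by nlinarith : (0:ℝ) ≤ a*b - 1 - (cp^2+cm^2)/2)]
  have hab : 1 ≤ a*b := by nlinarith [sq_nonneg cp, sq_nonneg cm]
  constructor
  · by_contra hA
    push_neg at hA
    have hbg : 1 < b := by nlinarith [mul_pos (sub_pos.2 hA) hb]
    have hpos : (0:ℝ) < (1-a^2)*(b^2-1) := mul_pos (by nlinarith) (by nlinarith)
    nlinarith [k1, sq_nonneg (cp^2+cm^2)]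
  · by_contra hA
    push_neg at hA
    have hbg : 1 < a := by nlinarith [mul_pos (sub_pos.2 hA) ha]
    have hpos : (0:ℝ) < (a^2-1)*(1-b^2) := mul_pos (by nlinarith) (by nlinarith)
    nlinarith [k1, sq_nonneg (cp^2+cm^2)]

/-- At `a = 1` the conditions force `c₊ = c₋ = 0`. -/
lemma aone (b cp cm : ℝ) (hb : 0 < b)
    (h1 : 1^2+b^2+2*cp*cm ≤ (1*b-cp^2)*(1*b-cm^2)+1) (h2 : 2 ≤ 2*1*b-cp^2-cm^2) :
    cp = 0 ∧ cm = 0 := by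
  have hb1 : 1 ≤ b := by nlinarith [sq_nonneg (cp+cm), sq_nonneg (cp^2-cm^2)]
  have hs : cp^2 + cm^2 = 0 := by
    nlinarith [sq_nonneg (cp+cm), sq_nonneg (cp^2-cm^2),
      mul_nonneg (by positivity : (0:ℝ) ≤ cp^2+cm^2) (by linarith : (0:ℝ) ≤ b - 1)]
  constructor <;> nlinarith [sq_nonneg cp, sq_nonneg cm]

open Complex

/-- Block-diagonal case `a = 1`, `c₊ = c₋ = 0`. -/
lemma blockdiag (b : ℝ) (hb1 : 1 ≤ b) :
    (cplx (!![1, 0, 0, 0; 0, 1, 0, 0; 0, 0, b, 0; 0, 0, 0, b])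
        + Complex.I • cplx Omega4).PosSemidef := by
  rw [posSemidef_iff_dotProduct_mulVec]
  constructor
  · show _ᴴ = _
    ext i j
    fin_cases i <;> fin_cases j <;>
      simp [cplx, Omega4, Matrix.conjTranspose_apply, Complex.ext_iff,
        Matrix.vecHead, Matrix.vecTail]
  · intro v
    have e : star v ⬝ᵥ (cplx (!![1, 0, 0, 0; 0, 1, 0, 0; 0, 0, b, 0; 0, 0, 0, b])
        + Complex.I • cplx Omega4) *ᵥ v =
        ((Complex.normSq (v 0) + Complex.normSq (v 1)
            - 2*((v 0).re * (v 1).im - (v 0).im * (v 1).re)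
          + b * Complex.normSq (v 2) + b * Complex.normSq (v 3)
            - 2*((v 2).re * (v 3).im - (v 2).im * (v 3).re) : ℝ) : ℂ) := by
      simp [cplx, Omega4, dotProduct, Matrix.mulVec, Fin.sum_univ_four, Complex.ext_iff,
        Matrix.vecHead, Matrix.vecTail, Complex.normSq_apply]
      constructor <;> ring
    rw [e, Complex.zero_le_real, Complex.normSq_apply, Complex.normSq_apply,
      Complex.normSq_apply, Complex.normSq_apply]
    nlinarith [sq_nonneg ((v 0).re - (v 1).im), sq_nonneg ((v 0).im + (v 1).re),
      sq_nonneg ((v 2).re - (v 3).im), sq_nonneg ((v 2).im + (v 3).re),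
      sq_nonneg ((v 2).re), sq_nonneg ((v 2).im), sq_nonneg ((v 3).re), sq_nonneg ((v 3).im)]

/-- The Schur-complement conditions, in cleared-denominator form, for `1 < a`. -/
lemma schur_iff' (a b cp cm : ℝ) (ha : 1 < a) :
    (cplx (!![a, 0, cp, 0; 0, a, 0, cm; cp, 0, b, 0; 0, cm, 0, b])
        + Complex.I • cplx Omega4).PosSemidef ↔
      (a*cp^2 ≤ b*(a^2-1) ∧ a*cm^2 ≤ b*(a^2-1) ∧
        (a^2-1+cp*cm)^2 ≤ (b*(a^2-1)-a*cp^2)*(b*(a^2-1)-a*cm^2)) := by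
  rw [schur_iff a b cp cm ha]
  have hd : (0:ℝ) < a^2 - 1 := by nlinarith
  have hd' : (a:ℝ)^2 - 1 ≠ 0 := ne_of_gt hd
  constructor
  · rintro ⟨e1, e2, e3⟩
    rw [sub_nonneg, div_le_iff₀ hd] at e1 e2
    refine ⟨by linarith, by linarith, ?_⟩
    have key : ((b - a*cp^2/(a^2-1)) * (b - a*cm^2/(a^2-1)) - (1 + cp*cm/(a^2-1))^2)
          * ((a^2-1)*(a^2-1))
        = (b*(a^2-1)-a*cp^2)*(b*(a^2-1)-a*cm^2) - (a^2-1+cp*cm)^2 := by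
      field_simp
    nlinarith [key, mul_pos hd hd]
  · rintro ⟨e1, e2, e3⟩
    have f1 : 0 ≤ b - a*cp^2/(a^2-1) := by
      rw [sub_nonneg, div_le_iff₀ hd]; linarith
    have f2 : 0 ≤ b - a*cm^2/(a^2-1) := by
      rw [sub_nonneg, div_le_iff₀ hd]; linarith
    refine ⟨f1, f2, ?_⟩
    have key : ((b - a*cp^2/(a^2-1)) * (b - a*cm^2/(a^2-1)) - (1 + cp*cm/(a^2-1))^2)
          * ((a^2-1)*(a^2-1))
        = (b*(a^2-1)-a*cp^2)*(b*(a^2-1)-a*cm^2) - (a^2-1+cp*cm)^2 := by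
      field_simp
    nlinarith [key, mul_pos hd hd]

end StdFormAux

open StdFormAux Complex

/-- For the standard-form matrix V^I with a, b > 0: V^I + iΩ ≥ 0 iff
a² + b² + 2c₊c₋ ≤ (ab − c₊²)(ab − c₋²) + 1 and 2ab − c₊² − c₋² ≥ 2. -/
theorem standard_form_uncertainty_iff (a b cp cm : ℝ) (ha : 0 < a) (hb : 0 < b) :
    (cplx (!![a, 0, cp, 0; 0, a, 0, cm; cp, 0, b, 0; 0, cm, 0, b])
        + Complex.I • cplx Omega4).PosSemidef
      ↔ (a ^ 2 + b ^ 2 + 2 * cp * cm ≤ (a * b - cp ^ 2) * (a * b - cm ^ 2) + 1 ∧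
         2 ≤ 2 * a * b - cp ^ 2 - cm ^ 2) := by
  constructor
  · intro h
    have ha1 : 1 ≤ a := by
      have h0 := (posSemidef_iff_dotProduct_mulVec.1 h).2 ![1, I, 0, 0]
      simp [cplx, Omega4, dotProduct, Matrix.mulVec, Fin.sum_univ_four, Complex.le_def,
        Matrix.vecHead, Matrix.vecTail] at h0
      linarith
    rcases eq_or_lt_of_le ha1 with ha1' | ha1'
    · -- a = 1
      have haa : a = 1 := ha1'.symm
      subst haa
      have hb1 : 1 ≤ b := by
        have h0 := (posSemidef_iff_dotProduct_mulVec.1 h).2 ![0, 0, 1, I]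
        simp [cplx, Omega4, dotProduct, Matrix.mulVec, Fin.sum_univ_four, Complex.le_def,
          Matrix.vecHead, Matrix.vecTail] at h0
        linarith
      have hcp : cp = 0 := by
        by_contra hcp
        set t : ℝ := -(b+1)/(2*cp) with ht
        have h0 := (posSemidef_iff_dotProduct_mulVec.1 h).2 ![(t:ℝ), I*t, 1, 0]
        simp [cplx, Omega4, dotProduct, Matrix.mulVec, Fin.sum_univ_four, Complex.le_def,
          Matrix.vecHead, Matrix.vecTail] at h0
        have key : t * cp + (cp * t + b) = -1 := by
          rw [ht]; field_simp; ring
        rw [key] at h0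
        norm_num at h0
      have hcm : cm = 0 := by
        by_contra hcm
        set t : ℝ := -(b+1)/(2*cm) with ht
        have h0 := (posSemidef_iff_dotProduct_mulVec.1 h).2 ![(t:ℝ), I*t, 0, I]
        simp [cplx, Omega4, dotProduct, Matrix.mulVec, Fin.sum_univ_four, Complex.le_def,
          Matrix.vecHead, Matrix.vecTail] at h0
        have key : t * cm + cm * t = -(b+1) := by
          rw [ht]; field_simp; ring
        rw [key] at h0
        linarith
      subst hcp; subst hcm
      constructor <;> nlinarith
    · -- 1 < a
      obtain ⟨hT1, hT2, hW⟩ := (schur_iff' a b cp cm ha1').1 h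
      exact fwdAlg a b cp cm ha1' hb hT1 hT2 hW
  · rintro ⟨h1, h2⟩
    have h1' : a^2+b^2+2*cp*cm ≤ (a*b-cp^2)*(a*b-cm^2)+1 := by linarith
    have h2' : 2 ≤ 2*a*b-cp^2-cm^2 := by linarith
    obtain ⟨ha1, hb1⟩ := geone a b cp cm ha hb h1' h2'
    rcases eq_or_lt_of_le ha1 with ha1' | ha1'
    · have haa : a = 1 := ha1'.symm
      subst haa
      obtain ⟨hcp, hcm⟩ := aone b cp cm hb (by linarith) (by linarith)
      subst hcp; subst hcm
      exact blockdiag b hb1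
    · rcases le_or_gt b a with hba | hab
      · rw [schur_iff' a b cp cm ha1']
        have hT1 := bwd1 a b cp cm ha1' hb hba h1' h2'
        have hT2 := bwd1 a b cm cp ha1' hb hba (by linarith) (by linarith)
        refine ⟨hT1, hT2, ?_⟩
        have key : (b*(a^2-1)-a*cp^2)*(b*(a^2-1)-a*cm^2) - (a^2-1+cp*cm)^2
            = (a^2-1)*((a*b-cp^2)*(a*b-cm^2)+1 - (a^2+b^2+2*cp*cm)) := by ring
        nlinarith [key, mul_nonneg (by nlinarith : (0:ℝ) ≤ a^2-1)
          (by linarith : (0:ℝ) ≤ (a*b-cp^2)*(a*b-cm^2)+1 - (a^2+b^2+2*cp*cm))]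
      · have hb1' : 1 < b := lt_trans ha1' hab
        rw [swap a b cp cm, schur_iff' b a cp cm hb1']
        have hT1 := bwd1 b a cp cm hb1' ha (le_of_lt hab) (by nlinarith) (by linarith)
        have hT2 := bwd1 b a cm cp hb1' ha (le_of_lt hab) (by nlinarith) (by linarith)
        refine ⟨hT1, hT2, ?_⟩
        have key : (a*(b^2-1)-b*cp^2)*(a*(b^2-1)-b*cm^2) - (b^2-1+cp*cm)^2
            = (b^2-1)*((a*b-cp^2)*(a*b-cm^2)+1 - (a^2+b^2+2*cp*cm)) := by ring
        nlinarith [key, mul_nonneg (by nlinarith : (0:ℝ) ≤ b^2-1)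
          (by linarith : (0:ℝ) ≤ (a*b-cp^2)*(a*b-cm^2)+1 - (a^2+b^2+2*cp*cm))]
end

section
/- There exists x with 0 < x ≤ 1/8 such that the positive definite matrix V(x) satisfies Simon's condition det A·det B + (1 − det C)² − I₄ ≥ det A + det B (equivalently (1/2)+x(8x−5) ≥ 0) but violates the Heisenberg condition V(x) + iΩ ≥ 0. Hence Simon's genuineness condition alone is not equivalent to the uncertainty principle for positive definite matrices. -/
open Matrix
open scoped ComplexOrder

/-- The two-mode symplectic form Ω = ω ⊕ ω, in block form. -/
def Omega2mode : Matrix (Fin 2 ⊕ Fin 2) (Fin 2 ⊕ Fin 2) ℝ :=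
  Matrix.fromBlocks omega2 0 0 omega2

/-- Diagonal blocks A(x) = B(x) of the family V(x). -/
noncomputable def Ax (x : ℝ) : Matrix (Fin 2) (Fin 2) ℝ :=
  (1 / 2 : ℝ) • !![1 + 4 * x, 0; 0, 1 + 4 * x]

/-- Off-diagonal block C(x) of the family V(x). -/
noncomputable def Cx (x : ℝ) : Matrix (Fin 2) (Fin 2) ℝ :=
  (1 / 2 : ℝ) • !![-1 + 4 * x, 0; 0, -(4 * x)]

/-- The family V(x) of Eq. (63), in block form [[A,C],[Cᵀ,A]]. -/
noncomputable def Vx (x : ℝ) : Matrix (Fin 2 ⊕ Fin 2) (Fin 2 ⊕ Fin 2) ℝ :=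
  Matrix.fromBlocks (Ax x) (Cx x) (Cx x)ᵀ (Ax x)

lemma Ax8 : Ax (1/8) = !![3/4, 0; 0, 3/4] := by
  ext i j; fin_cases i <;> fin_cases j <;> norm_num [Ax]

lemma Cx8 : Cx (1/8) = !![-(1/4), 0; 0, -(1/4)] := by
  ext i j; fin_cases i <;> fin_cases j <;> norm_num [Cx]

lemma Cx8T : (Cx (1/8))ᵀ = !![-(1/4), 0; 0, -(1/4)] := by
  rw [Cx8]; ext i j; fin_cases i <;> fin_cases j <;> rfl

/-- There is x with 0 < x ≤ 1/8 such that V(x) is positive definite and satisfies Simon's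
condition det A det B + (1 − det C)² − I₄ ≥ det A + det B (equivalently
1/2 + x(8x−5) ≥ 0), yet violates the Heisenberg condition V(x) + iΩ ≥ 0. -/
theorem simon_condition_not_sufficient :
    ∃ x : ℝ, 0 < x ∧ x ≤ 1 / 8 ∧ (Vx x).PosDef ∧
      (Ax x).det + (Ax x).det
        ≤ (Ax x).det * (Ax x).det + (1 - (Cx x).det) ^ 2
          - (Ax x * omega2 * Cx x * omega2 * Ax x * omega2 * (Cx x)ᵀ * omega2).trace ∧
      0 ≤ 1 / 2 + x * (8 * x - 5) ∧
      ¬ (cplx (Vx x) + Complex.I • cplx Omega2mode).PosSemidef := by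
  refine ⟨1/8, by norm_num, le_refl _, ?_, ?_, by norm_num, ?_⟩
  · refine Matrix.posDef_iff_dotProduct_mulVec.mpr ⟨?_, ?_⟩
    · ext i j
      rcases i with i|i <;> rcases j with j|j <;> fin_cases i <;> fin_cases j <;>
        simp [Vx, Ax, Cx, Matrix.fromBlocks, Matrix.conjTranspose, Matrix.transpose]
    · intro v hv
      simp only [Vx, Ax8, Cx8, dotProduct, Matrix.mulVec, Fintype.sum_sum_type,
        Fin.sum_univ_two, Matrix.fromBlocks, Matrix.transpose_apply, Matrix.of_apply,
        Sum.elim_inl, Sum.elim_inr, Matrix.cons_val', Matrix.cons_val_zero,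
        Matrix.cons_val_one, Matrix.head_cons, Matrix.head_fin_const, RCLike.star_def,
        star_trivial]
      have h : v (Sum.inl 0) ≠ 0 ∨ v (Sum.inl 1) ≠ 0 ∨ v (Sum.inr 0) ≠ 0 ∨
          v (Sum.inr 1) ≠ 0 := by
        by_contra h; push_neg at h
        apply hv; ext i
        rcases i with i|i <;> fin_cases i <;> simp [h.1, h.2.1, h.2.2.1, h.2.2.2]
      rcases h with h|h|h|h <;> nlinarith [mul_self_pos.mpr h,
        sq_nonneg (v (Sum.inl 0) - v (Sum.inr 0)),
        sq_nonneg (v (Sum.inl 1) - v (Sum.inr 1)), sq_nonneg (v (Sum.inl 0)),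
        sq_nonneg (v (Sum.inl 1)), sq_nonneg (v (Sum.inr 0)), sq_nonneg (v (Sum.inr 1)),
        sq_nonneg (v (Sum.inl 0) + v (Sum.inr 0)), sq_nonneg (v (Sum.inl 1) + v (Sum.inr 1))]
  · rw [Ax8, Cx8T, Cx8]
    norm_num [omega2, Matrix.det_fin_two_of, Matrix.trace_fin_two,
      Matrix.mul_apply, Fin.sum_univ_two]
  · intro h
    have := (Matrix.posSemidef_iff_dotProduct_mulVec.mp h).2 (Sum.elim ![1, Complex.I] ![1, Complex.I])
    simp only [Vx, Ax8, Cx8, Cx8T, cplx, Omega2mode, omega2, Matrix.map_apply,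
      Matrix.add_apply, Matrix.smul_apply, dotProduct, Matrix.mulVec,
      Fintype.sum_sum_type, Fin.sum_univ_two, Matrix.fromBlocks, Matrix.transpose_apply,
      Matrix.of_apply, Sum.elim_inl, Sum.elim_inr, Matrix.cons_val', Matrix.cons_val_zero,
      Matrix.cons_val_one, Matrix.head_cons, Matrix.head_fin_const, Matrix.zero_apply,
      Pi.star_apply, RCLike.star_def] at this
    simp only [Complex.le_def] at this
    norm_num [Complex.ext_iff, Complex.mul_re, Complex.mul_im] at this
end
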